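/- Let n ≥ 1, let g be a real polynomial, and let M be a real symmetric n×n matrix whose eigenvalues (given by the spectral theorem for real symmetric matrices) are pairwise distinct and all nonzero. Assume the polynomial evaluation map x ↦ g(x) is injective on ℝ and that g(x) ≠ 0 for every x ≠ 0. Then for every real symmetric n×n matrix M′, the matrix equation g(M′) = g(M) has the unique solution M′ = M; that is, g(M′) = g(M) implies M′ = M. -/

import Mathlib

open Matrix Polynomial

section Aux

variable {m : Type*} [Fintype m] [DecidableEq m]

/-- Conjugation by a unitary matrix as an algebra homomorphism. -/
noncomputable def conjAlgHom (U : Matrix.unitaryGroup m ℝ) :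
    Matrix m m ℝ →ₐ[ℝ] Matrix m m ℝ where
  toFun B := (U : Matrix m m ℝ) * B * star (U : Matrix m m ℝ)
  map_one' := by
    simpa using (Matrix.mem_unitaryGroup_iff.mp U.2)
  map_mul' B C := by
    have h : star (U : Matrix m m ℝ) * (U : Matrix m m ℝ) = 1 :=
      Matrix.mem_unitaryGroup_iff'.mp U.2
    simp only [Matrix.mul_assoc]
    rw [← Matrix.mul_assoc (star (U : Matrix m m ℝ)), h, Matrix.one_mul]
  map_zero' := by simp
  map_add' B C := by simp [Matrix.add_mul, Matrix.mul_add]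
  commutes' r := by
    simp only [Algebra.algebraMap_eq_smul_one, Matrix.smul_mul, Matrix.mul_smul, Matrix.mul_one]
    rw [Matrix.mem_unitaryGroup_iff.mp U.2]

lemma aeval_diagonal (d : m → ℝ) (p : ℝ[X]) :
    aeval (Matrix.diagonal d) p = Matrix.diagonal (fun i => p.eval (d i)) := by
  have h : Matrix.diagonal d = Matrix.diagonalAlgHom ℝ d := rfl
  rw [h, aeval_algHom_apply]
  show Matrix.diagonal (aeval d p) = _
  have h3 : (aeval d p : m → ℝ) = fun i => p.eval (d i) := by
    funext i
    have h4 := aeval_algHom_apply (Pi.evalAlgHom ℝ (fun _ : m => ℝ) i) d p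
    simpa using h4.symm
  rw [h3]

lemma aeval_hermitian {A : Matrix m m ℝ} (hA : A.IsHermitian) (p : ℝ[X]) :
    aeval A p = (hA.eigenvectorUnitary : Matrix m m ℝ) *
      Matrix.diagonal (fun i => p.eval (hA.eigenvalues i)) *
      star (hA.eigenvectorUnitary : Matrix m m ℝ) := by
  have hs : A = conjAlgHom hA.eigenvectorUnitary (Matrix.diagonal hA.eigenvalues) := by
    have := hA.spectral_theorem
    simpa [conjAlgHom, Function.comp] using this
  conv_lhs => rw [hs]
  rw [aeval_algHom_apply, aeval_diagonal]
  rfl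

lemma spectrum_aeval_hermitian {A : Matrix m m ℝ} (hA : A.IsHermitian) (p : ℝ[X]) :
    spectrum ℝ (aeval A p) = Set.range (fun i => p.eval (hA.eigenvalues i)) := by
  rw [aeval_hermitian hA p, Unitary.spectrum_star_right_conjugate, spectrum_diagonal]

end Aux

/-- If a real symmetric matrix `M` has pairwise distinct nonzero eigenvalues
(given by the spectral theorem), the scalar polynomial kernel `g` is injective on `ℝ`
and nonvanishing away from `0`, then `g(M') = g(M)` forces `M' = M` for every
real symmetric matrix `M'`. -/
theorem polynomial_matrix_equation_unique_solution
    (n : ℕ) (hn : 1 ≤ n) (g : Polynomial ℝ)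
    (M : Matrix (Fin n) (Fin n) ℝ) (hM : M.IsHermitian)
    (hdist : Function.Injective hM.eigenvalues)
    (hnz : ∀ i, hM.eigenvalues i ≠ 0)
    (hginj : Function.Injective fun x : ℝ => g.eval x)
    (hg0 : ∀ x : ℝ, x ≠ 0 → g.eval x ≠ 0)
    (M' : Matrix (Fin n) (Fin n) ℝ) (hM' : M'ᵀ = M')
    (heq : Polynomial.aeval M' g = Polynomial.aeval M g) :
    M' = M := by
  classical
  have hM'h : M'.IsHermitian := by
    rw [Matrix.IsHermitian, Matrix.conjTranspose]
    simpa [Matrix.map, conj_trivial, Matrix.transpose] using hM'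
  set lam := hM.eigenvalues
  set mu := hM'h.eigenvalues
  -- nodes are injective
  have hnodes : Function.Injective (fun i => g.eval (lam i)) :=
    fun i j h => hdist (hginj h)
  -- the interpolation polynomial
  set q : ℝ[X] := Lagrange.interpolate Finset.univ (fun i => g.eval (lam i)) lam with hq
  have hqeval : ∀ i, q.eval (g.eval (lam i)) = lam i := fun i =>
    Lagrange.eval_interpolate_at_node lam (hnodes.injOn) (Finset.mem_univ i)
  -- every eigenvalue of M' is an eigenvalue of M
  have hsub : ∀ j, ∃ i, mu j = lam i := by
    intro j
    have h1 : mu j ∈ spectrum ℝ M' := hM'h.eigenvalues_mem_spectrum_real j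
    have h2 : g.eval (mu j) ∈ spectrum ℝ (aeval M' g) :=
      spectrum.subset_polynomial_aeval M' g ⟨mu j, h1, rfl⟩
    rw [heq, spectrum_aeval_hermitian hM] at h2
    obtain ⟨i, hi⟩ := h2
    exact ⟨i, hginj hi.symm⟩
  have hqeval' : ∀ j, q.eval (g.eval (mu j)) = mu j := by
    intro j
    obtain ⟨i, hi⟩ := hsub j
    rw [hi, hqeval]
  -- M' = q(g(M')) and M = q(g(M))
  have hM'eq : aeval M' (q.comp g) = M' := by
    rw [aeval_hermitian hM'h]
    conv_rhs => rw [hM'h.spectral_theorem]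
    simp [eval_comp, (show ∀ j, q.eval (g.eval (hM'h.eigenvalues j)) = hM'h.eigenvalues j from hqeval'), Function.comp]
  have hMeq : aeval M (q.comp g) = M := by
    rw [aeval_hermitian hM]
    conv_rhs => rw [hM.spectral_theorem]
    simp [eval_comp, (show ∀ i, q.eval (g.eval (hM.eigenvalues i)) = hM.eigenvalues i from hqeval), Function.comp]
  calc M' = aeval M' (q.comp g) := hM'eq.symm
    _ = aeval (aeval M' g) q := by rw [aeval_comp]
    _ = aeval (aeval M g) q := by rw [heq]
    _ = aeval M (q.comp g) := by rw [aeval_comp]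
    _ = M := hMeq
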